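/- For any instance with exactly 2 agents whose true valuations are nonnegative monotone subadditive set functions, and any bid profile (b_1, b_2) in which agent i's bid b_i is a best response to the other agent's bid, the allocation produced by Preferred-Item-E-C-E on (b_1, b_2) is (1/2)-EF1 from agent i's perspective with respect to agent i's true valuation. -/
import Mathlib


/-!
Formalization of the strategic Envy-Cycle-Elimination (E-C-E) setting with monotone
subadditive (set-function) valuations.

There are `n` agents and `m` goods (`Fin m`), with the predefined ordering of agents
and goods given by the orders on `Fin n` and `Fin m`.  A bid consists of a reported
nonnegative monotone subadditive set function together with a preference list (a
permutation of the goods); the envy graph is defined using the reported set-function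
values.  E-C-E starts from empty bundles and, while unallocated goods remain, selects
a source of the envy graph will (envious sources have priority, ties broken by the
predefined agent ordering), adds to that agent's bundle the earliest unallocated good
in her preference list, and then repeatedly eliminates envy cycles, in a fixed order,
until the envy graph has a source.  This is the Preferred-Item-E-C-E variant.
-/

open scoped Classical
open Finset

/-- A bid of an agent in the subadditive setting: a reported nonnegative monotone
subadditive set function together with a preference list, a permutation of the
goods. -/
structure SetBid (m : ℕ) where
  val : Finset (Fin m) → ℝ
  nonneg : ∀ S, 0 ≤ val S
  mono : ∀ S T, val S ≤ val (S ∪ T)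
  subadd : ∀ S T, val (S ∪ T) ≤ val S + val T
  pref : Equiv.Perm (Fin m)

namespace SubECE

variable {n m : ℕ}

/-- Envy-graph edge: agent `i` envies agent `j` (w.r.t. the reported set-function
valuations) under the partial allocation `P`. -/
def envies (b : Fin n → SetBid m) (P : Fin n → Finset (Fin m)) (i j : Fin n) : Prop :=
  (b i).val (P i) < (b i).val (P j)

/-- The sources (vertices of in-degree 0) of the envy graph. -/
noncomputable def sources (b : Fin n → SetBid m) (P : Fin n → Finset (Fin m)) :
    Finset (Fin n) :=
  univ.filter fun i => ∀ j, ¬ envies b P j i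

/-- The envy cycles of the current envy graph, represented as cyclic permutations `σ`
of the agents such that every agent moved by `σ` envies her image under `σ`. -/
noncomputable def cycleSet (b : Fin n → SetBid m) (P : Fin n → Finset (Fin m)) :
    Finset (Equiv.Perm (Fin n)) :=
  univ.filter fun σ => σ.IsCycle ∧ ∀ i, σ i ≠ i → envies b P i (σ i)

/-- A fixed enumeration of the permutations of the agents, providing the fixed
(lexicographic) order in which envy cycles are eliminated. -/
noncomputable def permIdx (n : ℕ) :
    Equiv.Perm (Fin n) ≃ Fin (Fintype.card (Equiv.Perm (Fin n))) :=
  Fintype.equivFin _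

/-- Eliminate one envy cycle (the first one in the fixed order): every agent on the
cycle receives the bundle of the agent she envies. -/
noncomputable def elimOnce (b : Fin n → SetBid m) (P : Fin n → Finset (Fin m)) :
    Fin n → Finset (Fin m) :=
  if h : (cycleSet b P).Nonempty then
    let σ := (permIdx n).symm (((cycleSet b P).image (permIdx n)).min' (h.image _))
    fun i => P (σ i)
  else P

/-- Repeatedly eliminate envy cycles until the envy graph has a source. -/
noncomputable def resolve (b : Fin n → SetBid m) :
    ℕ → (Fin n → Finset (Fin m)) → Fin n → Finset (Fin m)
  | 0, P => P
  | fuel + 1, P => if (sources b P).Nonempty then P else resolve b fuel (elimOnce b P)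

/-- Source selection: among multiple sources, those having at least one outgoing envy
edge have priority, ties broken by the predefined ordering of the agents. -/
noncomputable def priAgent (b : Fin n → SetBid m) (P : Fin n → Finset (Fin m)) :
    Option (Fin n) :=
  if h' : ((sources b P).filter fun i => ∃ j, envies b P i j).Nonempty then
    some (((sources b P).filter fun i => ∃ j, envies b P i j).min' h')
  else if h : (sources b P).Nonempty then some ((sources b P).min' h) else none

/-- The earliest unallocated good in the preference list `pref`. -/
noncomputable def preferredItem (pref : Equiv.Perm (Fin m)) (R : Finset (Fin m))
    (hR : R.Nonempty) : Fin m :=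
  pref.symm ((R.image pref).min' (hR.image _))

/-- The state (current partial allocation, remaining unallocated goods) of the
Preferred-Item-E-C-E run after a given number of steps. -/
noncomputable def stateECE (b : Fin n → SetBid m) :
    ℕ → (Fin n → Finset (Fin m)) × Finset (Fin m)
  | 0 => (fun _ => ∅, univ)
  | k + 1 =>
    let s := stateECE b k
    if hR : s.2.Nonempty then
      match priAgent b s.1 with
      | none => s
      | some i =>
        let g := preferredItem (b i).pref s.2 hR
        (resolve b (n * n + 1) (fun j => if j = i then insert g (s.1 j) else s.1 j),
          s.2.erase g)
    else s

/-- Preferred-Item-E-C-E with reported set-function valuations: envious sources have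
priority, and the chosen agent receives the earliest unallocated good in her
preference list. -/
noncomputable def PreferredItemECE (b : Fin n → SetBid m) : Fin n → Finset (Fin m) :=
  (stateECE b m).1

/-- The allocation `A` is `α`-EF1 from agent `i`'s perspective w.r.t. the set-function
valuation `v`: for every agent `j` with nonempty bundle there is a good `g ∈ A j` with
`v (A i) ≥ α · v (A j \ {g})`. -/
def EF1From (α : ℝ) (v : Finset (Fin m) → ℝ) (A : Fin n → Finset (Fin m))
    (i : Fin n) : Prop :=
  ∀ j : Fin n, (A j).Nonempty → ∃ g ∈ A j, α * v ((A j).erase g) ≤ v (A i)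

/-- Agent `i`'s bid in the profile `b` is a best response to the others' bids, w.r.t.
her true set-function valuation `v`: no alternative bid gives her a bundle of strictly
larger true value. -/
def BestResponse (Mech : (Fin n → SetBid m) → Fin n → Finset (Fin m))
    (v : Finset (Fin m) → ℝ) (b : Fin n → SetBid m) (i : Fin n) : Prop :=
  ∀ b' : SetBid m, v (Mech (Function.update b i b') i) ≤ v (Mech b i)

end SubECE

open SubECE

namespace SubECEAux

open SubECE

variable {m : ℕ}

lemma val_mono (bb : SetBid m) {S T : Finset (Fin m)} (h : S ⊆ T) :
    bb.val S ≤ bb.val T := by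
  have h2 := bb.mono S T
  rwa [Finset.union_eq_right.mpr h] at h2

variable (c : Fin 2 → SetBid m) (i jo : Fin 2)

/-- Invariant: agent `i` is EF1 towards `jo` w.r.t. `i`'s reported valuation. -/
def Inv (P : Fin 2 → Finset (Fin m)) : Prop :=
  P jo = ∅ ∨ ∃ g ∈ P jo, (c i).val ((P jo).erase g) ≤ (c i).val (P i)

lemma min_cycle_mem {P : Fin 2 → Finset (Fin m)} (h : (cycleSet c P).Nonempty) :
    (permIdx 2).symm (((cycleSet c P).image (permIdx 2)).min' (h.image _)) ∈
      cycleSet c P := by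
  have h2 := Finset.min'_mem ((cycleSet c P).image (permIdx 2)) (h.image _)
  rcases Finset.mem_image.mp h2 with ⟨τ, hτ, hτ2⟩
  rw [← hτ2, Equiv.symm_apply_apply]
  exact hτ

lemma cycle_struct (hij : i ≠ jo) (hpair : ∀ k : Fin 2, k = i ∨ k = jo)
    {P : Fin 2 → Finset (Fin m)} {σ : Equiv.Perm (Fin 2)}
    (hσ : σ ∈ cycleSet c P) :
    σ i = jo ∧ σ jo = i ∧ envies c P i jo ∧ envies c P jo i := by
  rw [cycleSet, Finset.mem_filter] at hσ
  obtain ⟨-, hcyc, henv⟩ := hσ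
  obtain ⟨x, hx, -⟩ := hcyc
  have hii : σ i ≠ i := by
    intro hfix
    have hjj : σ jo = jo := by
      rcases hpair (σ jo) with h | h
      · exact absurd (σ.injective (h.trans hfix.symm)) (Ne.symm hij)
      · exact h
    rcases hpair x with rfl | rfl
    · exact hx hfix
    · exact hx hjj
  have h1 : σ i = jo := (hpair (σ i)).resolve_left hii
  have h2 : σ jo = i := by
    rcases hpair (σ jo) with h | h
    · exact h
    · exact absurd (σ.injective (h1.trans h.symm)) hij
  have hjj : σ jo ≠ jo := by rw [h2]; exact hij
  refine ⟨h1, h2, ?_, ?_⟩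
  · have := henv i hii; rwa [h1] at this
  · have := henv jo hjj; rwa [h2] at this

lemma elim_id {P : Fin 2 → Finset (Fin m)} (h : ¬ (cycleSet c P).Nonempty) :
    elimOnce c P = P := by
  simp [elimOnce, h]

lemma elim_swap (hij : i ≠ jo) (hpair : ∀ k : Fin 2, k = i ∨ k = jo)
    {P : Fin 2 → Finset (Fin m)} (h : (cycleSet c P).Nonempty) :
    elimOnce c P i = P jo ∧ elimOnce c P jo = P i ∧
      envies c P i jo ∧ envies c P jo i := by
  have hσ := min_cycle_mem c h
  obtain ⟨h1, h2, h3, h4⟩ := cycle_struct c i jo hij hpair hσ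
  refine ⟨?_, ?_, h3, h4⟩
  · simp only [elimOnce, dif_pos h]
    rw [h1]
  · simp only [elimOnce, dif_pos h]
    rw [h2]

lemma inv_elim (hij : i ≠ jo) (hpair : ∀ k : Fin 2, k = i ∨ k = jo)
    {P : Fin 2 → Finset (Fin m)} (hI : Inv c i jo P) :
    Inv c i jo (elimOnce c P) := by
  by_cases h : (cycleSet c P).Nonempty
  · obtain ⟨h1, h2, h3, _⟩ := elim_swap c i jo hij hpair h
    rw [Inv, h1, h2]
    rcases (P i).eq_empty_or_nonempty with he | ⟨g, hg⟩
    · exact Or.inl he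
    · refine Or.inr ⟨g, hg, ?_⟩
      have hm : (c i).val ((P i).erase g) ≤ (c i).val (P i) :=
        val_mono _ (Finset.erase_subset g (P i))
      have h3' : (c i).val (P i) < (c i).val (P jo) := h3
      linarith
  · rwa [elim_id c h]

lemma cover_elim (hij : i ≠ jo) (hpair : ∀ k : Fin 2, k = i ∨ k = jo)
    {P : Fin 2 → Finset (Fin m)} {R : Finset (Fin m)}
    (hC : ∀ g, g ∈ P i ∨ g ∈ P jo ∨ g ∈ R) :
    ∀ g, g ∈ elimOnce c P i ∨ g ∈ elimOnce c P jo ∨ g ∈ R := by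
  by_cases h : (cycleSet c P).Nonempty
  · obtain ⟨h1, h2, -, -⟩ := elim_swap c i jo hij hpair h
    rw [h1, h2]
    intro g; rcases hC g with h' | h' | h' <;> tauto
  · rwa [elim_id c h]

lemma inv_resolve (hij : i ≠ jo) (hpair : ∀ k : Fin 2, k = i ∨ k = jo) :
    ∀ (fuel : ℕ) (P : Fin 2 → Finset (Fin m)), Inv c i jo P →
      Inv c i jo (resolve c fuel P) := by
  intro fuel
  induction fuel with
  | zero => intro P h; exact h
  | succ f ih =>
    intro P h
    rw [resolve]
    split
    · exact h
    · exact ih _ (inv_elim c i jo hij hpair h)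

lemma cover_resolve (hij : i ≠ jo) (hpair : ∀ k : Fin 2, k = i ∨ k = jo)
    (R : Finset (Fin m)) :
    ∀ (fuel : ℕ) (P : Fin 2 → Finset (Fin m)),
      (∀ g, g ∈ P i ∨ g ∈ P jo ∨ g ∈ R) →
      ∀ g, g ∈ resolve c fuel P i ∨ g ∈ resolve c fuel P jo ∨ g ∈ R := by
  intro fuel
  induction fuel with
  | zero => intro P h; exact h
  | succ f ih =>
    intro P h
    rw [resolve]
    split
    · exact h
    · exact ih _ (cover_elim c i jo hij hpair h)

lemma swap_mem_of_sources_empty (hij : i ≠ jo) (hpair : ∀ k : Fin 2, k = i ∨ k = jo)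
    {P : Fin 2 → Finset (Fin m)} (h : ¬ (sources c P).Nonempty) :
    Equiv.swap i jo ∈ cycleSet c P := by
  have h' : ∀ k : Fin 2, ∃ l, envies c P l k := by
    intro k
    by_contra hk
    push_neg at hk
    exact h ⟨k, Finset.mem_filter.mpr ⟨Finset.mem_univ _, hk⟩⟩
  obtain ⟨l1, hl1⟩ := h' i
  obtain ⟨l2, hl2⟩ := h' jo
  have e1 : envies c P jo i := by
    rcases hpair l1 with rfl | rfl
    · exact absurd hl1 (by simp [envies])
    · exact hl1
  have e2 : envies c P i jo := by
    rcases hpair l2 with rfl | rfl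
    · exact hl2
    · exact absurd hl2 (by simp [envies])
  rw [cycleSet, Finset.mem_filter]
  refine ⟨Finset.mem_univ _, Equiv.Perm.isCycle_swap hij, ?_⟩
  intro k hk
  rcases hpair k with rfl | rfl
  · rwa [Equiv.swap_apply_left]
  · rwa [Equiv.swap_apply_right]

lemma sources_elim_nonempty (hij : i ≠ jo) (hpair : ∀ k : Fin 2, k = i ∨ k = jo)
    {P : Fin 2 → Finset (Fin m)} (h : (cycleSet c P).Nonempty) :
    (sources c (elimOnce c P)).Nonempty := by
  obtain ⟨h1, h2, h3, h4⟩ := elim_swap c i jo hij hpair h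
  refine ⟨i, Finset.mem_filter.mpr ⟨Finset.mem_univ _, ?_⟩⟩
  intro k
  rcases hpair k with rfl | rfl
  · simp [envies]
  · intro hlt
    rw [envies, h2, h1] at hlt
    exact absurd hlt (not_lt.mpr (le_of_lt h4))

lemma resolve_sources (hij : i ≠ jo) (hpair : ∀ k : Fin 2, k = i ∨ k = jo)
    (P : Fin 2 → Finset (Fin m)) :
    (sources c (resolve c (2 * 2 + 1) P)).Nonempty := by
  show (sources c (resolve c (4 + 1) P)).Nonempty
  rw [resolve]
  by_cases h : (sources c P).Nonempty
  · rwa [if_pos h]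
  · rw [if_neg h]
    have h4 : (sources c (elimOnce c P)).Nonempty :=
      sources_elim_nonempty c i jo hij hpair
        ⟨_, swap_mem_of_sources_empty c i jo hij hpair h⟩
    show (sources c (resolve c (3 + 1) (elimOnce c P))).Nonempty
    rwa [resolve, if_pos h4]

lemma priAgent_spec {P : Fin 2 → Finset (Fin m)} (h : (sources c P).Nonempty) :
    ∃ a, priAgent c P = some a ∧ ∀ k, ¬ envies c P k a := by
  by_cases h1 : ((sources c P).filter fun a => ∃ j, envies c P a j).Nonempty
  · refine ⟨_, by rw [priAgent, dif_pos h1], ?_⟩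
    have hm := Finset.min'_mem _ h1
    have hs := (Finset.mem_filter.mp hm).1
    exact (Finset.mem_filter.mp hs).2
  · refine ⟨_, by rw [priAgent, dif_neg h1, dif_pos h], ?_⟩
    exact (Finset.mem_filter.mp (Finset.min'_mem _ h)).2

lemma preferredItem_mem (pref : Equiv.Perm (Fin m)) (R : Finset (Fin m))
    (hR : R.Nonempty) : preferredItem pref R hR ∈ R := by
  have h2 := Finset.min'_mem (R.image pref) (hR.image _)
  rcases Finset.mem_image.mp h2 with ⟨r, hr, hre⟩
  rw [preferredItem, ← hre, Equiv.symm_apply_apply]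
  exact hr

lemma stateECE_succ_none (b : Fin 2 → SetBid m) (k : ℕ)
    (hR : ¬ (stateECE b k).2.Nonempty) : stateECE b (k + 1) = stateECE b k := by
  rw [stateECE, dif_neg hR]

lemma stateECE_succ_some (b : Fin 2 → SetBid m) (k : ℕ)
    (hR : (stateECE b k).2.Nonempty) {a : Fin 2}
    (ha : priAgent b (stateECE b k).1 = some a) :
    stateECE b (k + 1) =
      (resolve b (2 * 2 + 1) (fun j => if j = a then
          insert (preferredItem (b a).pref (stateECE b k).2 hR) ((stateECE b k).1 j)
        else (stateECE b k).1 j),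
        (stateECE b k).2.erase (preferredItem (b a).pref (stateECE b k).2 hR)) := by
  rw [stateECE, dif_pos hR, ha]

lemma state_inv (hij : i ≠ jo) (hpair : ∀ k : Fin 2, k = i ∨ k = jo) :
    ∀ k : ℕ,
      Inv c i jo (stateECE c k).1 ∧
      (∀ g, g ∈ (stateECE c k).1 i ∨ g ∈ (stateECE c k).1 jo ∨ g ∈ (stateECE c k).2) ∧
      (stateECE c k).2.card ≤ m - k ∧
      (sources c (stateECE c k).1).Nonempty := by
  intro k
  induction k with
  | zero =>
    refine ⟨Or.inl rfl, fun g => Or.inr (Or.inr ?_), ?_, ⟨i, ?_⟩⟩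
    · simp [stateECE]
    · simp [stateECE]
    · simp [stateECE, sources, envies]
  | succ k ih =>
    obtain ⟨hInv, hCov, hCard, hSrc⟩ := ih
    by_cases hR : (stateECE c k).2.Nonempty
    · obtain ⟨a, ha, hna⟩ := priAgent_spec c (P := (stateECE c k).1) hSrc
      rw [stateECE_succ_some c k hR ha]
      set s := stateECE c k with hs
      set g0 := preferredItem (c a).pref s.2 hR with hg0
      set Pins : Fin 2 → Finset (Fin m) :=
        fun j => if j = a then insert g0 (s.1 j) else s.1 j with hPins
      have hg0mem : g0 ∈ s.2 := preferredItem_mem _ _ _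
      have hInvIns : Inv c i jo Pins := by
        rcases hpair a with ha' | ha'
        · -- a = i : i's bundle grows
          subst ha'
          have hji : jo ≠ a := Ne.symm hij
          have hPj : Pins jo = s.1 jo := by simp [hPins, hji]
          have hPi : Pins a = insert g0 (s.1 a) := by simp [hPins]
          rw [Inv, hPj, hPi]
          rcases hInv with he | ⟨g, hg, hv⟩
          · exact Or.inl he
          · refine Or.inr ⟨g, hg, ?_⟩
            exact le_trans hv (val_mono _ (Finset.subset_insert _ _))
        · -- a = jo : jo's bundle grows but i does not envy jo
          subst ha'
          have hPi : Pins i = s.1 i := by simp [hPins, hij]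
          have hPj : Pins a = insert g0 (s.1 a) := by simp [hPins]
          have hle : (c i).val (s.1 a) ≤ (c i).val (s.1 i) := by
            have h' := hna i
            rw [envies] at h'
            exact not_lt.mp h'
          rw [Inv, hPi, hPj]
          refine Or.inr ⟨g0, Finset.mem_insert_self _ _, ?_⟩
          refine le_trans (val_mono _ ?_) hle
          exact Finset.erase_insert_subset g0 (s.1 a)
      have hCovIns : ∀ g, g ∈ Pins i ∨ g ∈ Pins jo ∨ g ∈ s.2.erase g0 := by
        intro g
        have hsub : ∀ j : Fin 2, s.1 j ⊆ Pins j := by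
          intro j
          rw [hPins]
          by_cases hj : j = a
          · simp only [if_pos hj]; exact Finset.subset_insert _ _
          · simp only [if_neg hj]; exact subset_rfl
        rcases hCov g with h' | h' | h'
        · exact Or.inl (hsub i h')
        · exact Or.inr (Or.inl (hsub jo h'))
        · by_cases hgg : g = g0
          · have hmemP : g0 ∈ Pins a := by
              have hPa : Pins a = insert g0 (s.1 a) := by simp [hPins]
              rw [hPa]; exact Finset.mem_insert_self _ _
            rw [hgg]
            rcases hpair a with ha' | ha'
            · exact Or.inl (ha' ▸ hmemP)
            · exact Or.inr (Or.inl (ha' ▸ hmemP))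
          · exact Or.inr (Or.inr (Finset.mem_erase.mpr ⟨hgg, h'⟩))
      refine ⟨inv_resolve c i jo hij hpair _ _ hInvIns,
        cover_resolve c i jo hij hpair _ _ _ hCovIns, ?_,
        resolve_sources c i jo hij hpair _⟩
      have h1 : 1 ≤ s.2.card := Finset.card_pos.mpr hR
      have h2 : (s.2.erase g0).card = s.2.card - 1 :=
        Finset.card_erase_of_mem hg0mem
      show (s.2.erase g0).card ≤ m - (k + 1)
      omega
    · rw [stateECE_succ_none c k hR]
      have h0 : (stateECE c k).2.card = 0 := by
        rw [Finset.card_eq_zero]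
        exact Finset.not_nonempty_iff_eq_empty.mp hR
      exact ⟨hInv, hCov, by omega, hSrc⟩

end SubECEAux

/-- For any instance with exactly 2 agents whose true valuations are
nonnegative monotone subadditive set functions, and any bid profile in which agent
`i`'s bid is a best response to the other agent's bid, the allocation produced by
Preferred-Item-E-C-E is `(1/2)`-EF1 from agent `i`'s perspective with respect to agent
`i`'s true valuation. -/
theorem preferredItem_two_subadditive_best_response_half_EF1 {m : ℕ}
    (v : Fin 2 → Finset (Fin m) → ℝ)
    (hnn : ∀ i S, 0 ≤ v i S)
    (hmono : ∀ i (S T : Finset (Fin m)), v i S ≤ v i (S ∪ T))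
    (hsub : ∀ i (S T : Finset (Fin m)), v i (S ∪ T) ≤ v i S + v i T)
    (b : Fin 2 → SetBid m) (i : Fin 2)
    (hbr : BestResponse PreferredItemECE (v i) b i) :
    EF1From (1 / 2) (v i) (PreferredItemECE b) i := by
  have vmono : ∀ S T : Finset (Fin m), S ⊆ T → v i S ≤ v i T := by
    intro S T h
    have := hmono i S T
    rwa [Finset.union_eq_right.mpr h] at this
  intro j hj
  by_cases hji : j = i
  · subst hji
    obtain ⟨g, hg⟩ := hj
    refine ⟨g, hg, ?_⟩
    have h1 : v j ((PreferredItemECE b j).erase g) ≤ v j (PreferredItemECE b j) :=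
      vmono _ _ (Finset.erase_subset _ _)
    have h0 := hnn j ((PreferredItemECE b j).erase g)
    linarith
  · have hij : i ≠ j := fun h => hji h.symm
    have hpair : ∀ k : Fin 2, k = i ∨ k = j := by
      intro k
      have h1 : k.val < 2 := k.isLt
      have h2 : i.val < 2 := i.isLt
      have h3 : j.val < 2 := j.isLt
      have h4 : i.val ≠ j.val := fun h => hij (Fin.ext h)
      have h5 : k.val = i.val ∨ k.val = j.val := by omega
      rcases h5 with h | h
      · exact Or.inl (Fin.ext h)
      · exact Or.inr (Fin.ext h)
    set b' : SetBid m := ⟨v i, hnn i, hmono i, hsub i, (b i).pref⟩ with hb'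
    set c : Fin 2 → SetBid m := Function.update b i b' with hcdef
    have hval : (c i).val = v i := by
      rw [hcdef, Function.update_self]
    obtain ⟨hInv, hCov, hCard, -⟩ := SubECEAux.state_inv c i j hij hpair m
    set X := (stateECE c m).1 i with hX
    set Y := (stateECE c m).1 j with hY
    have hS : (stateECE c m).2 = ∅ := by
      rw [← Finset.card_eq_zero]
      omega
    have hCov' : ∀ g : Fin m, g ∈ X ∨ g ∈ Y := by
      intro g
      rcases hCov g with h | h | h
      · exact Or.inl h
      · exact Or.inr h
      · rw [hS] at h
        exact absurd h (Finset.notMem_empty g)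
    have hbrX : v i X ≤ v i (PreferredItemECE b i) := hbr b'
    rw [SubECEAux.Inv, hval, ← hX, ← hY] at hInv
    rcases hInv with hYe | ⟨g, hgY, hle⟩
    · -- Y empty, so X = univ
      have hXu : X = Finset.univ := by
        apply Finset.eq_univ_iff_forall.mpr
        intro g
        rcases hCov' g with h | h
        · exact h
        · rw [hYe] at h
          exact absurd h (Finset.notMem_empty g)
      obtain ⟨g, hg⟩ := hj
      refine ⟨g, hg, ?_⟩
      have h1 : v i ((PreferredItemECE b j).erase g) ≤ v i X := by
        rw [hXu]
        exact vmono _ _ (Finset.subset_univ _)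
      have h0 := hnn i ((PreferredItemECE b j).erase g)
      linarith
    · have hsubset : Finset.univ.erase g ⊆ X ∪ Y.erase g := by
        intro x hx
        rcases Finset.mem_erase.mp hx with ⟨hxg, -⟩
        rcases hCov' x with h | h
        · exact Finset.mem_union_left _ h
        · exact Finset.mem_union_right _ (Finset.mem_erase.mpr ⟨hxg, h⟩)
      have h1 : v i (Finset.univ.erase g) ≤ v i X + v i (Y.erase g) :=
        le_trans (vmono _ _ hsubset) (hsub i X (Y.erase g))
      have hkey : v i (Finset.univ.erase g) ≤ 2 * v i (PreferredItemECE b i) := by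
        linarith
      by_cases hgA : g ∈ PreferredItemECE b j
      · refine ⟨g, hgA, ?_⟩
        have h2 : v i ((PreferredItemECE b j).erase g) ≤ v i (Finset.univ.erase g) :=
          vmono _ _ (Finset.erase_subset_erase _ (Finset.subset_univ _))
        linarith
      · obtain ⟨g', hg'⟩ := hj
        refine ⟨g', hg', ?_⟩
        have h2 : v i ((PreferredItemECE b j).erase g') ≤ v i (Finset.univ.erase g) := by
          apply vmono
          intro x hx
          have hxA : x ∈ PreferredItemECE b j := Finset.mem_of_mem_erase hx
          have hxg : x ≠ g := fun h => hgA (h ▸ hxA)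
          exact Finset.mem_erase.mpr ⟨hxg, Finset.mem_univ x⟩
        linarith
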